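/- Perfect-model decrease rate of the propagated dual bound: let ((λ_t, ρ_t)_{t=0}^T, (μ_t, ν̲_t, ν̄_t, σ_t)_{t=0}^{T−1}) be dual feasible with dual objective d₀ for data (x₀, (v̲_t), (v̄_t)), and let u₀ ∈ ℝ^p satisfy F x₀ + G u₀ ≤ h and v̲₀ ≤ V u₀ ≤ v̄₀ componentwise. Then the dual objective d₁ of the shifted multipliers for the data (A x₀ + B u₀, (v̲'_t), (v̄'_t)) satisfies d₁ ≥ d₀ − |Q x₀|² − |R u₀|². -/
import Mathlib


open Matrix

/-- The squared Euclidean norm `|v|²` of a vector in `ℝ^k`. -/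
noncomputable def sqNorm {k : ℕ} (v : Fin k → ℝ) : ℝ := ∑ i, v i ^ 2

variable {n p q r c m : ℕ}

/-- Primal feasibility of a trajectory `((x_t)_{t=0}^T, (u_t)_{t=0}^{T-1})` for the data
`(x̄, (v̲_t), (v̄_t))` of the QP relaxation of the hybrid MPC problem. -/
def PrimalFeasible (T : ℕ)
    (A : Matrix (Fin n) (Fin n) ℝ) (B : Matrix (Fin n) (Fin p) ℝ)
    (F : Matrix (Fin c) (Fin n) ℝ) (G : Matrix (Fin c) (Fin p) ℝ)
    (V : Matrix (Fin m) (Fin p) ℝ) (h : Fin c → ℝ)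
    (xbar : Fin n → ℝ) (vlo vhi : ℕ → Fin m → ℝ)
    (x : ℕ → Fin n → ℝ) (u : ℕ → Fin p → ℝ) : Prop :=
  x 0 = xbar ∧
  (∀ t < T, x (t + 1) = A *ᵥ x t + B *ᵥ u t) ∧
  (∀ t < T, ∀ i, (F *ᵥ x t + G *ᵥ u t) i ≤ h i) ∧
  (∀ t < T, ∀ i, vlo t i ≤ (V *ᵥ u t) i ∧ (V *ᵥ u t) i ≤ vhi t i)

/-- Cost `Σ_{t=0}^T |Q x_t|² + Σ_{t=0}^{T-1} |R u_t|²` of a trajectory. -/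
noncomputable def trajCost (T : ℕ) (Q : Matrix (Fin q) (Fin n) ℝ) (R : Matrix (Fin r) (Fin p) ℝ)
    (x : ℕ → Fin n → ℝ) (u : ℕ → Fin p → ℝ) : ℝ :=
  ∑ t ∈ Finset.range (T + 1), sqNorm (Q *ᵥ x t) + ∑ t ∈ Finset.range T, sqNorm (R *ᵥ u t)

/-- Dual feasibility of a tuple of multipliers
`((λ_t, ρ_t)_{t=0}^T, (μ_t, ν̲_t, ν̄_t, σ_t)_{t=0}^{T-1})`.
Note that dual feasibility does not depend on the bound sequences `(v̲_t), (v̄_t)`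
nor on the initial state `x̄`. -/
def DualFeasible (T : ℕ)
    (A : Matrix (Fin n) (Fin n) ℝ) (B : Matrix (Fin n) (Fin p) ℝ)
    (Q : Matrix (Fin q) (Fin n) ℝ) (R : Matrix (Fin r) (Fin p) ℝ)
    (F : Matrix (Fin c) (Fin n) ℝ) (G : Matrix (Fin c) (Fin p) ℝ)
    (V : Matrix (Fin m) (Fin p) ℝ)
    (lam : ℕ → Fin n → ℝ) (rho : ℕ → Fin q → ℝ)
    (mu : ℕ → Fin c → ℝ) (nlo nhi : ℕ → Fin m → ℝ) (sig : ℕ → Fin r → ℝ) : Prop :=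
  (∀ t < T, Qᵀ *ᵥ rho t + lam t - Aᵀ *ᵥ lam (t + 1) + Fᵀ *ᵥ mu t = 0) ∧
  Qᵀ *ᵥ rho T + lam T = 0 ∧
  (∀ t < T, Rᵀ *ᵥ sig t - Bᵀ *ᵥ lam (t + 1) + Gᵀ *ᵥ mu t + Vᵀ *ᵥ (nhi t - nlo t) = 0) ∧
  (∀ t < T, ∀ i, 0 ≤ mu t i) ∧ (∀ t < T, ∀ i, 0 ≤ nlo t i) ∧ (∀ t < T, ∀ i, 0 ≤ nhi t i)

/-- The dual objective
`d := −Σ_{t=0}^T |ρ_t/2|² − Σ_{t=0}^{T−1}(|σ_t/2|² + hᵀμ_t + v̄_tᵀν̄_t − v̲_tᵀν̲_t) − x̄ᵀλ_0`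
for the data `(x̄, (v̲_t), (v̄_t))`. -/
noncomputable def dualObj (T : ℕ) (h : Fin c → ℝ) (xbar : Fin n → ℝ) (vlo vhi : ℕ → Fin m → ℝ)
    (lam : ℕ → Fin n → ℝ) (rho : ℕ → Fin q → ℝ)
    (mu : ℕ → Fin c → ℝ) (nlo nhi : ℕ → Fin m → ℝ) (sig : ℕ → Fin r → ℝ) : ℝ :=
  -(∑ t ∈ Finset.range (T + 1), sqNorm (fun i => rho t i / 2))
    - ∑ t ∈ Finset.range T,
        (sqNorm (fun i => sig t i / 2) + h ⬝ᵥ mu t + vhi t ⬝ᵥ nhi t - vlo t ⬝ᵥ nlo t)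
    - xbar ⬝ᵥ lam 0

/-- Shift of a `{0,…,T}`-indexed family of multipliers (the `λ_t` or `ρ_t`):
`w'_t := w_{t+1}` for `t = 0,…,T−1` and `w'_T := 0`. -/
noncomputable def shiftT (T : ℕ) {k : ℕ} (w : ℕ → Fin k → ℝ) : ℕ → Fin k → ℝ :=
  fun t => if t < T then w (t + 1) else 0

/-- Shift of a `{0,…,T−1}`-indexed family (the `μ_t, ν̲_t, ν̄_t, σ_t` or the lower
bounds `v̲_t`): `w'_t := w_{t+1}` for `t = 0,…,T−2` and `w'_{T−1} := 0`. -/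
noncomputable def shiftS (T : ℕ) {k : ℕ} (w : ℕ → Fin k → ℝ) : ℕ → Fin k → ℝ :=
  fun t => if t + 1 < T then w (t + 1) else 0

/-- Shift of the upper bounds `v̄_t`: `v̄'_t := v̄_{t+1}` for `t = 0,…,T−2` and
`v̄'_{T−1} := 1` (the all-ones vector). -/
noncomputable def shiftHi (T : ℕ) {k : ℕ} (w : ℕ → Fin k → ℝ) : ℕ → Fin k → ℝ :=
  fun t => if t + 1 < T then w (t + 1) else fun _ => 1

lemma mulVec_dot_aux {a b : ℕ} (M : Matrix (Fin a) (Fin b) ℝ) (v : Fin b → ℝ) (w : Fin a → ℝ) :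
    (M *ᵥ v) ⬝ᵥ w = v ⬝ᵥ (Mᵀ *ᵥ w) := by
  rw [Matrix.dotProduct_mulVec, Matrix.vecMul_transpose]

/-- **Perfect-model decrease rate of the propagated dual bound:** for a dual-feasible
tuple with dual objective `d₀` for `(x₀, (v̲_t), (v̄_t))` and a control `u₀` with
`F x₀ + G u₀ ≤ h` and `v̲₀ ≤ V u₀ ≤ v̄₀`, the dual objective `d₁` of the shifted
multipliers for the data `(A x₀ + B u₀, (v̲'_t), (v̄'_t))` satisfies
`d₁ ≥ d₀ − |Q x₀|² − |R u₀|²`. -/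
theorem perfect_model_dual_bound_decrease (n p q r c m T : ℕ) (hT : 1 ≤ T)
    (A : Matrix (Fin n) (Fin n) ℝ) (B : Matrix (Fin n) (Fin p) ℝ)
    (Q : Matrix (Fin q) (Fin n) ℝ) (R : Matrix (Fin r) (Fin p) ℝ)
    (F : Matrix (Fin c) (Fin n) ℝ) (G : Matrix (Fin c) (Fin p) ℝ)
    (V : Matrix (Fin m) (Fin p) ℝ) (h : Fin c → ℝ)
    (x0 : Fin n → ℝ) (u0 : Fin p → ℝ)
    (vlo vhi : ℕ → Fin m → ℝ)
    (lam : ℕ → Fin n → ℝ) (rho : ℕ → Fin q → ℝ)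
    (mu : ℕ → Fin c → ℝ) (nlo nhi : ℕ → Fin m → ℝ) (sig : ℕ → Fin r → ℝ)
    (hdual : DualFeasible T A B Q R F G V lam rho mu nlo nhi sig)
    (hfeas : ∀ i, (F *ᵥ x0 + G *ᵥ u0) i ≤ h i)
    (hbox : ∀ i, vlo 0 i ≤ (V *ᵥ u0) i ∧ (V *ᵥ u0) i ≤ vhi 0 i) :
    dualObj T h x0 vlo vhi lam rho mu nlo nhi sig
        - (sqNorm (Q *ᵥ x0) + sqNorm (R *ᵥ u0)) ≤
      dualObj T h (A *ᵥ x0 + B *ᵥ u0) (shiftS T vlo) (shiftHi T vhi)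
        (shiftT T lam) (shiftT T rho) (shiftS T mu) (shiftS T nlo) (shiftS T nhi)
        (shiftS T sig) := by
  obtain ⟨S, rfl⟩ := Nat.exists_eq_add_of_le' hT
  obtain ⟨hd1, hd2, hd3, hmu0, hnlo0, hnhi0⟩ := hdual
  have hA : Aᵀ *ᵥ lam 1 = Qᵀ *ᵥ rho 0 + lam 0 + Fᵀ *ᵥ mu 0 := by
    have e1 := hd1 0 (by omega)
    norm_num at e1
    funext i
    have h' := congrFun e1 i
    simp only [Pi.add_apply, Pi.sub_apply, Pi.zero_apply] at h' ⊢
    linarith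
  have hB : Bᵀ *ᵥ lam 1 = Rᵀ *ᵥ sig 0 + Gᵀ *ᵥ mu 0 + Vᵀ *ᵥ (nhi 0 - nlo 0) := by
    have e3 := hd3 0 (by omega)
    norm_num at e3
    funext i
    have h' := congrFun e3 i
    simp only [Pi.add_apply, Pi.sub_apply, Pi.zero_apply] at h' ⊢
    linarith
  have key : (A *ᵥ x0 + B *ᵥ u0) ⬝ᵥ lam 1
      = (Q *ᵥ x0) ⬝ᵥ rho 0 + x0 ⬝ᵥ lam 0 + (F *ᵥ x0) ⬝ᵥ mu 0
        + (R *ᵥ u0) ⬝ᵥ sig 0 + (G *ᵥ u0) ⬝ᵥ mu 0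
        + ((V *ᵥ u0) ⬝ᵥ nhi 0 - (V *ᵥ u0) ⬝ᵥ nlo 0) := by
    rw [add_dotProduct, mulVec_dot_aux A, mulVec_dot_aux B, hA, hB]
    simp only [dotProduct_add, ← mulVec_dot_aux, dotProduct_sub]
    ring
  have hq : (Q *ᵥ x0) ⬝ᵥ rho 0 ≤ sqNorm (fun i => rho 0 i / 2) + sqNorm (Q *ᵥ x0) := by
    simp only [sqNorm, dotProduct, ← Finset.sum_add_distrib]
    apply Finset.sum_le_sum
    intro i _
    nlinarith [sq_nonneg (rho 0 i / 2 - (Q *ᵥ x0) i)]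
  have hr : (R *ᵥ u0) ⬝ᵥ sig 0 ≤ sqNorm (fun i => sig 0 i / 2) + sqNorm (R *ᵥ u0) := by
    simp only [sqNorm, dotProduct, ← Finset.sum_add_distrib]
    apply Finset.sum_le_sum
    intro i _
    nlinarith [sq_nonneg (sig 0 i / 2 - (R *ᵥ u0) i)]
  have hmu' : (F *ᵥ x0) ⬝ᵥ mu 0 + (G *ᵥ u0) ⬝ᵥ mu 0 ≤ h ⬝ᵥ mu 0 := by
    rw [← add_dotProduct]
    simp only [dotProduct]
    exact Finset.sum_le_sum fun i _ =>
      mul_le_mul_of_nonneg_right (hfeas i) (hmu0 0 (by omega) i)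
  have hnhi' : (V *ᵥ u0) ⬝ᵥ nhi 0 ≤ vhi 0 ⬝ᵥ nhi 0 := by
    simp only [dotProduct]
    exact Finset.sum_le_sum fun i _ =>
      mul_le_mul_of_nonneg_right (hbox i).2 (hnhi0 0 (by omega) i)
  have hnlo' : vlo 0 ⬝ᵥ nlo 0 ≤ (V *ᵥ u0) ⬝ᵥ nlo 0 := by
    simp only [dotProduct]
    exact Finset.sum_le_sum fun i _ =>
      mul_le_mul_of_nonneg_right (hbox i).1 (hnlo0 0 (by omega) i)
  have hrho1 : ∑ t ∈ Finset.range (S + 1 + 1), sqNorm (fun i => shiftT (S + 1) rho t i / 2)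
      = ∑ t ∈ Finset.range (S + 1), sqNorm (fun i => rho (t + 1) i / 2) := by
    rw [Finset.sum_range_succ]
    have hz : sqNorm (fun i => shiftT (S + 1) rho (S + 1) i / 2) = 0 := by
      simp [shiftT, sqNorm]
    rw [hz, add_zero]
    exact Finset.sum_congr rfl fun t ht => by
      simp [shiftT, Finset.mem_range.mp ht]
  have hrho0 : ∑ t ∈ Finset.range (S + 1 + 1), sqNorm (fun i => rho t i / 2)
      = sqNorm (fun i => rho 0 i / 2)
        + ∑ t ∈ Finset.range (S + 1), sqNorm (fun i => rho (t + 1) i / 2) := by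
    rw [Finset.sum_range_succ']
    ring
  have hg1 : ∑ t ∈ Finset.range (S + 1),
        (sqNorm (fun i => shiftS (S + 1) sig t i / 2) + h ⬝ᵥ shiftS (S + 1) mu t
          + shiftHi (S + 1) vhi t ⬝ᵥ shiftS (S + 1) nhi t
          - shiftS (S + 1) vlo t ⬝ᵥ shiftS (S + 1) nlo t)
      = ∑ t ∈ Finset.range S,
        (sqNorm (fun i => sig (t + 1) i / 2) + h ⬝ᵥ mu (t + 1)
          + vhi (t + 1) ⬝ᵥ nhi (t + 1) - vlo (t + 1) ⬝ᵥ nlo (t + 1)) := by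
    rw [Finset.sum_range_succ]
    have hz : (sqNorm (fun i => shiftS (S + 1) sig S i / 2) + h ⬝ᵥ shiftS (S + 1) mu S
          + shiftHi (S + 1) vhi S ⬝ᵥ shiftS (S + 1) nhi S
          - shiftS (S + 1) vlo S ⬝ᵥ shiftS (S + 1) nlo S) = 0 := by
      simp [shiftS, shiftHi, sqNorm]
    rw [hz, add_zero]
    refine Finset.sum_congr rfl fun t ht => ?_
    have ht' : t + 1 < S + 1 := by
      have := Finset.mem_range.mp ht; omega
    simp [shiftS, shiftHi, ht']
  have hg0 : ∑ t ∈ Finset.range (S + 1),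
        (sqNorm (fun i => sig t i / 2) + h ⬝ᵥ mu t + vhi t ⬝ᵥ nhi t - vlo t ⬝ᵥ nlo t)
      = (sqNorm (fun i => sig 0 i / 2) + h ⬝ᵥ mu 0 + vhi 0 ⬝ᵥ nhi 0 - vlo 0 ⬝ᵥ nlo 0)
        + ∑ t ∈ Finset.range S,
          (sqNorm (fun i => sig (t + 1) i / 2) + h ⬝ᵥ mu (t + 1)
            + vhi (t + 1) ⬝ᵥ nhi (t + 1) - vlo (t + 1) ⬝ᵥ nlo (t + 1)) := by
    rw [Finset.sum_range_succ']
    ring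
  have hlam0 : shiftT (S + 1) lam 0 = lam 1 := by simp [shiftT]
  simp only [dualObj]
  rw [hrho1, hrho0, hg1, hg0, hlam0, key]
  linarith [hq, hr, hmu', hnhi', hnlo']
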